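/- Let α,β∈P̂ₙ. If there is a data tree T and nodes x,y of T such that T,x,y⊨α and T,x,y⊨β, then α=β (the two path expressions are syntactically identical). -/

import Mathlib

attribute [local instance] Classical.propDecidable

mutual
/-- Path expressions of `XPath↓⁻` (no inequality tests in the language). -/
inductive PathExpr (A : Type) : Type
  | eps : PathExpr A
  | down : PathExpr A
  | test : NodeExpr A → PathExpr A
  | comp : PathExpr A → PathExpr A → PathExpr A
  | union : PathExpr A → PathExpr A → PathExpr A

/-- Node expressions of `XPath↓⁻` (no inequality tests in the language). -/
inductive NodeExpr (A : Type) : Type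
  | lab : A → NodeExpr A
  | neg : NodeExpr A → NodeExpr A
  | conj : NodeExpr A → NodeExpr A → NodeExpr A
  | diam : PathExpr A → NodeExpr A
  | eqTest : PathExpr A → PathExpr A → NodeExpr A
end

namespace XPathMinus

variable {A : Type}

/-- Defined disjunction `φ ∨ ψ := ¬(¬φ ∧ ¬ψ)`. -/
def nOr (φ ψ : NodeExpr A) : NodeExpr A := .neg (.conj (.neg φ) (.neg ψ))

/-- `⊤ := ⟨ε⟩`. -/
def topN : NodeExpr A := .diam .eps

/-- `⊥ := ¬⊤`. -/
def botN : NodeExpr A := .neg topN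

/-- `⊥̄ := [¬⟨ε⟩]`. -/
def botP : PathExpr A := .test (.neg (.diam .eps))

def bigOr (l : List (NodeExpr A)) : NodeExpr A := l.foldr nOr botN

def bigUnion (l : List (PathExpr A)) : PathExpr A := l.foldr PathExpr.union botP

/-- A data tree: a tree (connected, acyclic, unique parents except the root)
whose nodes carry labels from `A`, together with a partition of the nodes
(presented as an equivalence relation `eqd`). -/
structure DataTree (A : Type) where
  X : Type
  child : X → X → Prop
  root : X
  label : X → A
  eqd : X → X → Prop
  eqd_equiv : Equivalence eqd
  parent_unique : ∀ ⦃x y z : X⦄, child x z → child y z → x = y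
  root_no_parent : ∀ x : X, ¬ child x root
  reach : ∀ x : X, Relation.ReflTransGen child root x
  acyclic : ∀ x : X, ¬ Relation.TransGen child x x

mutual
/-- Semantics of path expressions. -/
def psem (T : DataTree A) : PathExpr A → T.X → T.X → Prop
  | .eps, x, y => x = y
  | .down, x, y => T.child x y
  | .test φ, x, y => x = y ∧ nsem T φ x
  | .comp α β, x, z => ∃ y, psem T α x y ∧ psem T β y z
  | .union α β, x, y => psem T α x y ∨ psem T β x y

/-- Semantics of node expressions. -/
def nsem (T : DataTree A) : NodeExpr A → T.X → Prop
  | .lab a, x => T.label x = a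
  | .neg φ, x => ¬ nsem T φ x
  | .conj φ ψ, x => nsem T φ x ∧ nsem T ψ x
  | .diam α, x => ∃ y, psem T α x y
  | .eqTest α β, x => ∃ y z, psem T α x y ∧ psem T β x z ∧ T.eqd y z
end

/-- Semantic equivalence of node expressions: same denotation in every data tree. -/
def nodeValid (φ ψ : NodeExpr A) : Prop :=
  ∀ (T : DataTree A) (x : T.X), nsem T φ x ↔ nsem T ψ x

/-- Semantic equivalence of path expressions: same denotation in every data tree. -/
def pathValid (α β : PathExpr A) : Prop :=
  ∀ (T : DataTree A) (x y : T.X), psem T α x y ↔ psem T β x y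

mutual
/-- Derivability of node equivalences in the axiomatic system `XP⁻`. -/
inductive NDer {A : Type} [Fintype A] : NodeExpr A → NodeExpr A → Prop
  | refl (φ : NodeExpr A) : NDer φ φ
  | symm {φ ψ : NodeExpr A} : NDer φ ψ → NDer ψ φ
  | trans {φ ψ ρ : NodeExpr A} : NDer φ ψ → NDer ψ ρ → NDer φ ρ
  | congr_neg {φ ψ : NodeExpr A} : NDer φ ψ → NDer (.neg φ) (.neg ψ)
  | congr_conj {φ φ' ψ ψ' : NodeExpr A} :
      NDer φ φ' → NDer ψ ψ' → NDer (.conj φ ψ) (.conj φ' ψ')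
  | congr_diam {α β : PathExpr A} : PDer α β → NDer (.diam α) (.diam β)
  | congr_eqTest {α α' β β' : PathExpr A} :
      PDer α α' → PDer β β' → NDer (.eqTest α β) (.eqTest α' β')
  | lbAx1 : NDer topN (bigOr ((Finset.univ : Finset A).toList.map NodeExpr.lab))
  | lbAx2 {a b : A} : a ≠ b → NDer botN (.conj (.lab a) (.lab b))
  | ndAx1 (φ ψ : NodeExpr A) :
      NDer φ (nOr (.neg (nOr (.neg φ) ψ)) (.neg (nOr (.neg φ) (.neg ψ))))
  | ndAx2 (φ : NodeExpr A) : NDer (.diam (.test φ)) φ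
  | ndAx3 (α β : PathExpr A) : NDer (.diam (.union α β)) (nOr (.diam α) (.diam β))
  | ndAx4 (α β : PathExpr A) : NDer (.diam (.comp α β)) (.diam (.comp α (.test (.diam β))))
  | eqAx1 (α β : PathExpr A) : NDer (.eqTest α β) (.eqTest β α)
  | eqAx2 (α β γ : PathExpr A) :
      NDer (.eqTest (.union α β) γ) (nOr (.eqTest α γ) (.eqTest β γ))
  | eqAx3 (φ : NodeExpr A) (α β : PathExpr A) :
      NDer (.conj φ (.eqTest α β)) (.eqTest (.comp (.test φ) α) β)
  | eqAx4 (α β : PathExpr A) : NDer (nOr (.eqTest α β) (.diam α)) (.diam α)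
  | eqAx5 (γ α β : PathExpr A) :
      NDer (nOr (.diam (.comp γ (.test (.eqTest α β)))) (.eqTest (.comp γ α) (.comp γ β)))
        (.eqTest (.comp γ α) (.comp γ β))
  | eqAx6 (α : PathExpr A) : NDer (.eqTest α α) (.diam α)
  | eqAx7 (α β : PathExpr A) :
      NDer (nOr (.conj (.eqTest α .eps) (.eqTest β .eps)) (.eqTest α β)) (.eqTest α β)
  | eqAx8 (α β γ : PathExpr A) :
      NDer (nOr (.eqTest α (.comp β (.test (.eqTest .eps γ)))) (.eqTest α (.comp β γ)))
        (.eqTest α (.comp β γ))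

/-- Derivability of path equivalences in the axiomatic system `XP⁻`. -/
inductive PDer {A : Type} [Fintype A] : PathExpr A → PathExpr A → Prop
  | refl (α : PathExpr A) : PDer α α
  | symm {α β : PathExpr A} : PDer α β → PDer β α
  | trans {α β γ : PathExpr A} : PDer α β → PDer β γ → PDer α γ
  | congr_test {φ ψ : NodeExpr A} : NDer φ ψ → PDer (.test φ) (.test ψ)
  | congr_comp {α α' β β' : PathExpr A} :
      PDer α α' → PDer β β' → PDer (.comp α β) (.comp α' β')
  | congr_union {α α' β β' : PathExpr A} :
      PDer α α' → PDer β β' → PDer (.union α β) (.union α' β')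
  | prAx1 (α β : PathExpr A) : PDer (.comp (.comp α (.test (.neg (.diam β)))) β) botP
  | prAx2 : PDer (.test topN) (.eps : PathExpr A)
  | prAx3 (φ ψ : NodeExpr A) : PDer (.test (nOr φ ψ)) (.union (.test φ) (.test ψ))
  | isAx1 (α β γ : PathExpr A) : PDer (.union (.union α β) γ) (.union α (.union β γ))
  | isAx2 (α β : PathExpr A) : PDer (.union α β) (.union β α)
  | isAx3 (α : PathExpr A) : PDer (.union α α) α
  | isAx4 (α β γ : PathExpr A) : PDer (.comp α (.comp β γ)) (.comp (.comp α β) γ)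
  | isAx5l (α : PathExpr A) : PDer (.comp .eps α) α
  | isAx5r (α : PathExpr A) : PDer (.comp α .eps) α
  | isAx6l (α β γ : PathExpr A) :
      PDer (.comp α (.union β γ)) (.union (.comp α β) (.comp α γ))
  | isAx6r (α β γ : PathExpr A) :
      PDer (.comp (.union α β) γ) (.union (.comp α γ) (.comp β γ))
  | isAx7 (α : PathExpr A) : PDer (.union botP α) α
end

/-- A node expression is `XP⁻`-consistent if it is not provably equivalent to `⊥`. -/
def NConsistent [Fintype A] (φ : NodeExpr A) : Prop := ¬ NDer φ botN

/-- A path expression is `XP⁻`-consistent if it is not provably equivalent to `⊥̄`. -/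
def PConsistent [Fintype A] (α : PathExpr A) : Prop := ¬ PDer α botP

/-- The normal form `a ∧ ⋀_{d ∈ C} d ∧ ⋀_{d ∈ D∖C} ¬d`, built along the canonical listing `D`. -/
noncomputable def mkNF (a : A) (C D : List (NodeExpr A)) : NodeExpr A :=
  D.foldl (fun acc d => .conj acc (if d ∈ C then d else .neg d)) (.lab a)

/-- The canonical lists of normal-form path expressions (first component)
and normal-form node expressions (second component) at each level. -/
noncomputable def NF (A : Type) [Fintype A] : ℕ → List (PathExpr A) × List (NodeExpr A)
  | 0 =>
    ([.eps],
      (Finset.univ : Finset A).toList.map fun a =>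
        NodeExpr.conj (.lab a) (.eqTest .eps .eps))
  | n+1 =>
    let P := (NF A n).1
    let N := (NF A n).2
    let P' : List (PathExpr A) :=
      .eps :: N.flatMap fun ψ => P.map fun β => PathExpr.comp .down (.comp (.test ψ) β)
    let D : List (NodeExpr A) :=
      P'.flatMap fun α => P'.map fun β => NodeExpr.eqTest α β
    let cands : List (NodeExpr A) :=
      D.sublists.flatMap fun C => (Finset.univ : Finset A).toList.map fun a => mkNF a C D
    (P', cands.filter fun φ => decide (NConsistent φ))

/-- `P̂ₙ`: normal-form path expressions of level `n`. -/
noncomputable def Pnf (A : Type) [Fintype A] (n : ℕ) : Set (PathExpr A) :=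
  {α | α ∈ (NF A n).1}

/-- `N̂ₙ`: normal-form node expressions of level `n`. -/
noncomputable def Nnf (A : Type) [Fintype A] (n : ℕ) : Set (NodeExpr A) :=
  {φ | φ ∈ (NF A n).2}

/-- `D̂ₙ`: data-aware diamonds between normal-form paths of level `n`. -/
noncomputable def Dnf (A : Type) [Fintype A] (n : ℕ) : Set (NodeExpr A) :=
  {φ | ∃ α ∈ Pnf A n, ∃ β ∈ Pnf A n, φ = NodeExpr.eqTest α β}

/-- The conjuncts of a node expression (flattening `∧`). -/
def conjuncts : NodeExpr A → List (NodeExpr A)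
  | .conj φ ψ => conjuncts φ ++ conjuncts ψ
  | φ => [φ]

/-- `δ` is a conjunct of `ψ`. -/
def IsConjunct (δ ψ : NodeExpr A) : Prop := δ ∈ conjuncts ψ

/-- Length of a path expression. -/
def plen : PathExpr A → ℕ
  | .eps => 0
  | .down => 1
  | .test _ => 0
  | .comp α β => plen α + plen β
  | .union α β => max (plen α) (plen β)

mutual
/-- Downward depth of a node expression. -/
def ndd : NodeExpr A → ℕ
  | .lab _ => 0
  | .neg φ => ndd φ
  | .conj φ ψ => max (ndd φ) (ndd ψ)
  | .diam α => pdd α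
  | .eqTest α β => max (pdd α) (pdd β)

/-- Downward depth of a path expression. -/
def pdd : PathExpr A → ℕ
  | .eps => 0
  | .down => 1
  | .test φ => ndd φ
  | .comp α β => max (max (pdd α) (pdd β)) (plen α + pdd β)
  | .union α β => max (pdd α) (pdd β)
end

/-- The path `↓[ψ]α`. -/
def dPath (ψ : NodeExpr A) (α : PathExpr A) : PathExpr A :=
  .comp .down (.comp (.test ψ) α)

/-- A path expression whose leftmost symbol is `↓`. -/
def startsWithDown : PathExpr A → Prop
  | .down => True
  | .comp α _ => startsWithDown α
  | _ => False

end XPathMinus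

namespace XPathMinus

variable {A : Type}

/-- Chains of child steps of a given length. -/
def chainN (T : DataTree A) : ℕ → T.X → T.X → Prop
  | 0, x, y => x = y
  | m+1, x, y => ∃ z, T.child x z ∧ chainN T m z y

lemma chain_snoc (T : DataTree A) :
    ∀ (m : ℕ) (x y : T.X), chainN T (m+1) x y ↔ ∃ w, chainN T m x w ∧ T.child w y := by
  intro m
  induction m with
  | zero =>
    intro x y
    constructor
    · rintro ⟨z, hz, rfl⟩; exact ⟨x, rfl, hz⟩
    · rintro ⟨w, rfl, hw⟩; exact ⟨y, hw, rfl⟩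
  | succ m ih =>
    intro x y
    constructor
    · rintro ⟨z, hz, hc⟩
      obtain ⟨w, hw1, hw2⟩ := (ih z y).mp hc
      exact ⟨w, ⟨z, hz, hw1⟩, hw2⟩
    · rintro ⟨w, ⟨z, hz, hc⟩, hw⟩
      exact ⟨z, hz, (ih z y).mpr ⟨w, hc, hw⟩⟩

lemma chain_transGen (T : DataTree A) :
    ∀ (m : ℕ) (x y : T.X), chainN T (m+1) x y → Relation.TransGen T.child x y := by
  intro m
  induction m with
  | zero => rintro x y ⟨z, hz, rfl⟩; exact Relation.TransGen.single hz
  | succ m ih => rintro x y ⟨z, hz, hc⟩; exact Relation.TransGen.head hz (ih z y hc)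

lemma anc_unique (T : DataTree A) :
    ∀ (m : ℕ) (y w1 w2 : T.X), chainN T m w1 y → chainN T m w2 y → w1 = w2 := by
  intro m
  induction m with
  | zero => intro y w1 w2 h1 h2; exact h1.trans h2.symm
  | succ m ih =>
    intro y w1 w2 h1 h2
    obtain ⟨u1, hu1, hc1⟩ := (chain_snoc T m w1 y).mp h1
    obtain ⟨u2, hu2, hc2⟩ := (chain_snoc T m w2 y).mp h2
    have : u1 = u2 := T.parent_unique hc1 hc2
    subst this
    exact ih u1 w1 w2 hu1 hu2

lemma chain_len_eq (T : DataTree A) :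
    ∀ (j k : ℕ) (x y : T.X), chainN T j x y → chainN T k x y → j = k := by
  intro j
  induction j with
  | zero =>
    intro k x y h1 h2
    cases k with
    | zero => rfl
    | succ k =>
      cases h1
      exact absurd (chain_transGen T k x x h2) (T.acyclic x)
  | succ j ih =>
    intro k x y h1 h2
    cases k with
    | zero =>
      cases h2
      exact absurd (chain_transGen T j x x h1) (T.acyclic x)
    | succ k =>
      obtain ⟨w1, hw1, hc1⟩ := (chain_snoc T j x y).mp h1
      obtain ⟨w2, hw2, hc2⟩ := (chain_snoc T k x y).mp h2
      have : w1 = w2 := T.parent_unique hc1 hc2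
      subst this
      exact congrArg Nat.succ (ih k x w1 hw1 hw2)

lemma nsem_foldl_conj (T : DataTree A) (f : NodeExpr A → NodeExpr A) :
    ∀ (D : List (NodeExpr A)) (init : NodeExpr A) (x : T.X),
      nsem T (D.foldl (fun acc d => .conj acc (f d)) init) x ↔
        nsem T init x ∧ ∀ d ∈ D, nsem T (f d) x := by
  intro D
  induction D with
  | nil => intro init x; simp
  | cons d D ih =>
    intro init x
    rw [List.foldl_cons, ih]
    constructor
    · rintro ⟨⟨h1, h2⟩, h3⟩
      exact ⟨h1, fun e he => by rcases List.mem_cons.mp he with rfl | he; exacts [h2, h3 e he]⟩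
    · rintro ⟨h1, h2⟩
      exact ⟨⟨h1, h2 d List.mem_cons_self⟩, fun e he => h2 e (List.mem_cons_of_mem d he)⟩

lemma foldl_conj_congr (f g : NodeExpr A → NodeExpr A) :
    ∀ (D : List (NodeExpr A)) (init : NodeExpr A),
      (∀ d ∈ D, f d = g d) →
      D.foldl (fun acc d => .conj acc (f d)) init = D.foldl (fun acc d => .conj acc (g d)) init := by
  intro D
  induction D with
  | nil => intro init _; rfl
  | cons d D ih =>
    intro init h
    rw [List.foldl_cons, List.foldl_cons, h d List.mem_cons_self,
      ih _ fun e he => h e (List.mem_cons_of_mem d he)]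

/-- Semantics of a normal-form path expression of level `n` is a chain of
`plen` child steps. -/
lemma nf_plen_chain [Fintype A] :
    ∀ (n : ℕ),
      (∀ α ∈ (NF A n).1, ∀ (T : DataTree A) (x y : T.X),
          psem T α x y → chainN T (plen α) x y) ∧
      (∀ φ ∈ (NF A n).2, ∀ ψ ∈ (NF A n).2, ∀ (T : DataTree A) (x : T.X),
          nsem T φ x → nsem T ψ x → φ = ψ) ∧
      (∀ α ∈ (NF A n).1, ∀ β ∈ (NF A n).1, ∀ (T : DataTree A) (x y : T.X),
          psem T α x y → psem T β x y → α = β) := by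
  intro n
  induction n with
  | zero =>
    refine ⟨?_, ?_, ?_⟩
    · intro α hα T x y h
      simp only [NF, List.mem_singleton] at hα
      subst hα
      exact h
    · intro φ hφ ψ hψ T x h1 h2
      simp only [NF, List.mem_map] at hφ hψ
      obtain ⟨a, _, rfl⟩ := hφ
      obtain ⟨b, _, rfl⟩ := hψ
      have ha : T.label x = a := h1.1
      have hb : T.label x = b := h2.1
      rw [← ha, hb]
    · intro α hα β hβ T x y h1 h2
      simp only [NF, List.mem_singleton] at hα hβ
      rw [hα, hβ]
  | succ n ih =>
    obtain ⟨ihL, ihN, ihP⟩ := ih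
    have hmem : ∀ α ∈ (NF A (n+1)).1, α = .eps ∨
        ∃ ψ ∈ (NF A n).2, ∃ γ ∈ (NF A n).1,
          α = PathExpr.comp .down (.comp (.test ψ) γ) := by
      intro α hα
      simp only [NF, List.mem_cons, List.mem_flatMap, List.mem_map] at hα
      rcases hα with rfl | ⟨ψ, hψ, γ, hγ, rfl⟩
      · exact Or.inl rfl
      · exact Or.inr ⟨ψ, hψ, γ, hγ, rfl⟩
    have hL : ∀ α ∈ (NF A (n+1)).1, ∀ (T : DataTree A) (x y : T.X),
        psem T α x y → chainN T (plen α) x y := by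
      intro α hα T x y h
      rcases hmem α hα with rfl | ⟨ψ, hψ, γ, hγ, rfl⟩
      · exact h
      · obtain ⟨z, hz, w, hw, hγw⟩ := h
        obtain ⟨heq, -⟩ := hw
        subst heq
        have hc : chainN T (plen γ) z y := ihL γ hγ T z y hγw
        have hp : plen (PathExpr.comp .down (.comp (.test ψ) γ)) = plen γ + 1 := by
          simp only [plen]; omega
        rw [hp]
        exact ⟨z, hz, hc⟩
    refine ⟨hL, ?_, ?_⟩
    · -- node uniqueness at level n+1
      intro φ hφ ψ hψ T x h1 h2
      simp only [NF] at hφ hψ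
      rw [List.mem_filter] at hφ hψ
      obtain ⟨hφ, -⟩ := hφ
      obtain ⟨hψ, -⟩ := hψ
      simp only [List.mem_flatMap, List.mem_map, List.mem_sublists] at hφ hψ
      obtain ⟨C, -, a, -, rfl⟩ := hφ
      obtain ⟨C', -, b, -, rfl⟩ := hψ
      unfold mkNF at h1 h2 ⊢
      rw [nsem_foldl_conj] at h1 h2
      obtain ⟨ha, h1⟩ := h1
      obtain ⟨hb, h2⟩ := h2
      have hab : a = b := by
        have : T.label x = a := ha
        have : T.label x = b := hb
        exact (‹T.label x = a›).symm.trans ‹T.label x = b›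
      subst hab
      refine foldl_conj_congr _ _ _ _ ?_
      intro d hd
      have hd1 := h1 d hd
      have hd2 := h2 d hd
      by_cases hc : d ∈ C <;> by_cases hc' : d ∈ C' <;> simp only [hc, hc', if_pos, if_neg,
        not_false_iff] at *
      · exact absurd hd1 hd2
      · exact absurd hd2 hd1
    · -- path uniqueness at level n+1
      intro α hα β hβ T x y h1 h2
      rcases hmem α hα with rfl | ⟨ψ, hψ, γ, hγ, rfl⟩ <;>
        rcases hmem β hβ with rfl | ⟨ψ', hψ', γ', hγ', rfl⟩
      · rfl
      · -- α = ε, β = ↓[ψ']γ'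
        cases h1
        have hc := hL _ hβ T x x h2
        have hp : plen (PathExpr.comp .down (.comp (.test ψ') γ')) = plen γ' + 1 := by
          simp only [plen]; omega
        rw [hp] at hc
        exact absurd (chain_transGen T _ x x hc) (T.acyclic x)
      · cases h2
        have hc := hL _ hα T x x h1
        have hp : plen (PathExpr.comp .down (.comp (.test ψ) γ)) = plen γ + 1 := by
          simp only [plen]; omega
        rw [hp] at hc
        exact absurd (chain_transGen T _ x x hc) (T.acyclic x)
      · obtain ⟨z, hz, w, hw, hγw⟩ := h1
        obtain ⟨heq, hψz⟩ := hw
        subst heq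
        obtain ⟨z', hz', w', hw', hγw'⟩ := h2
        obtain ⟨heq', hψz'⟩ := hw'
        subst heq'
        have c1 : chainN T (plen γ) z y := ihL γ hγ T z y hγw
        have c2 : chainN T (plen γ') z' y := ihL γ' hγ' T z' y hγw'
        have hlen : plen γ = plen γ' := by
          have e1 : chainN T (plen γ + 1) x y := ⟨z, hz, c1⟩
          have e2 : chainN T (plen γ' + 1) x y := ⟨z', hz', c2⟩
          exact Nat.succ_injective (chain_len_eq T _ _ x y e1 e2)
        rw [hlen] at c1
        have hzz : z = z' := anc_unique T _ y z z' c1 c2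
        subst hzz
        rw [ihN ψ hψ ψ' hψ' T z hψz hψz', ihP γ hγ γ' hγ' T z y hγw hγw']

end XPathMinus


/-- Two normal-form paths of the same level satisfied by the same pair of
nodes are syntactically identical. -/
theorem XPathMinus.nf_path_unique {A : Type} [Fintype A] (hA : 1 < Fintype.card A)
    (n : ℕ) (α β : PathExpr A) (hα : α ∈ Pnf A n) (hβ : β ∈ Pnf A n)
    (T : DataTree A) (x y : T.X)
    (h1 : psem T α x y) (h2 : psem T β x y) :
    α = β := by
  have h := (nf_plen_chain (A := A) n).2.2
  exact h α hα β hβ T x y h1 h2
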